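/- Let β ∈ (0,1) and ρ > 0. Define for μ ∈ [0,1] the functions η₊(μ) = μe^{ρβ}/(μe^{ρβ} + 1 − μ) and η₋(μ) = μ/(μ + (1−μ)e^{ρβ}). Then the function g(μ) = η₊(μ) − η₋(μ) attains its unique maximum on [0,1] at μ = 1/2. -/

import Mathlib

open Real

theorem stmt14 (β ρ : ℝ) (hβ : β ∈ Set.Ioo (0 : ℝ) 1) (hρ : 0 < ρ)
    (g : ℝ → ℝ)
    (hg : ∀ μ, g μ =
      μ * Real.exp (ρ * β) / (μ * Real.exp (ρ * β) + 1 - μ) -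
        μ / (μ + (1 - μ) * Real.exp (ρ * β))) :
    (∀ μ ∈ Set.Icc (0 : ℝ) 1, g μ ≤ g (1 / 2)) ∧
      (∀ μ ∈ Set.Icc (0 : ℝ) 1, g μ = g (1 / 2) → μ = 1 / 2) := by
  set k := Real.exp (ρ * β) with hkdef
  have hk1 : 1 < k := by
    have h : 0 < ρ * β := mul_pos hρ hβ.1
    have := Real.add_one_le_exp (ρ * β)
    simp only [hkdef]; linarith
  have hD1 : ∀ μ : ℝ, 0 ≤ μ → μ ≤ 1 → 0 < μ * k + 1 - μ := by
    intro μ h0 h1; nlinarith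
  have hD2 : ∀ μ : ℝ, 0 ≤ μ → μ ≤ 1 → 0 < μ + (1 - μ) * k := by
    intro μ h0 h1; nlinarith
  have key : ∀ μ : ℝ, 0 ≤ μ → μ ≤ 1 →
      g (1 / 2) - g μ =
        ((k - 1) * k * (2 * μ - 1) ^ 2) /
          ((k + 1) * ((μ * k + 1 - μ) * (μ + (1 - μ) * k))) := by
    intro μ h0 h1
    have d1 := (hD1 μ h0 h1).ne'
    have d2 := (hD2 μ h0 h1).ne'
    have d3 : (1 / 2 : ℝ) * k + 1 - 1 / 2 ≠ 0 := by
      have : (0:ℝ) < 1 / 2 * k + 1 - 1 / 2 := by linarith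
      exact this.ne'
    have d4 : (1 / 2 : ℝ) + (1 - 1 / 2) * k ≠ 0 := by
      have : (0:ℝ) < 1 / 2 + (1 - 1 / 2) * k := by linarith
      exact this.ne'
    have d5 : k + 1 ≠ 0 := by
      have : (0:ℝ) < k + 1 := by linarith
      exact this.ne'
    have d6 : (1:ℝ) + k ≠ 0 := by
      have : (0:ℝ) < 1 + k := by linarith
      exact this.ne'
    rw [hg, hg,
      show (1/2:ℝ) * k + 1 - 1/2 = (k+1)/2 by ring,
      show (1/2:ℝ) + (1 - 1/2) * k = (k+1)/2 by ring]
    rw [div_sub_div _ _ d1 d2, div_sub_div_same,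
      div_sub_div _ _ (div_ne_zero d5 two_ne_zero) (mul_ne_zero d1 d2),
      div_eq_div_iff (mul_ne_zero (div_ne_zero d5 two_ne_zero) (mul_ne_zero d1 d2))
        (mul_ne_zero d5 (mul_ne_zero d1 d2))]
    ring
  constructor
  · intro μ hμ
    have h := key μ hμ.1 hμ.2
    have hnum : 0 ≤ (k - 1) * k * (2 * μ - 1) ^ 2 :=
      mul_nonneg (mul_nonneg (by linarith) (by linarith)) (sq_nonneg _)
    have hden : 0 < (k + 1) * ((μ * k + 1 - μ) * (μ + (1 - μ) * k)) :=
      mul_pos (by linarith) (mul_pos (hD1 μ hμ.1 hμ.2) (hD2 μ hμ.1 hμ.2))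
    nlinarith [div_nonneg hnum hden.le]
  · intro μ hμ heq
    have h := key μ hμ.1 hμ.2
    rw [heq, sub_self] at h
    have hden : 0 < (k + 1) * ((μ * k + 1 - μ) * (μ + (1 - μ) * k)) :=
      mul_pos (by linarith) (mul_pos (hD1 μ hμ.1 hμ.2) (hD2 μ hμ.1 hμ.2))
    have hnum : (k - 1) * k * (2 * μ - 1) ^ 2 = 0 := by
      have := (div_eq_zero_iff.mp h.symm)
      rcases this with h' | h'
      · exact h'
      · exact absurd h' hden.ne'
    rcases mul_eq_zero.mp hnum with h' | h'
    · rcases mul_eq_zero.mp h' with h'' | h'' <;> nlinarith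
    · have : 2 * μ - 1 = 0 := by nlinarith [sq_nonneg (2 * μ - 1)]
      linarith
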